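/- If f : ℝ → ℂ is 1-periodic with absolutely convergent Fourier series f(x) = ∑_{m ∈ ℤ} c_m exp(2πi m x) and |c_m| ≤ C ρ^{-|m|} for some C > 0 and ρ > 1, then the trapezoidal-rule error satisfies |T_n(f) − c_0| ≤ 2C ρ^{-n}/(1 − ρ^{-n}) for all n ≥ 1, i.e., the error decays exponentially in n. -/

import Mathlib

open Finset

private lemma aux_expsum (n : ℕ) (hn : 1 ≤ n) (m : ℤ) :
    (1 / (n : ℂ)) * ∑ k ∈ Finset.range n,
      Complex.exp (2 * Real.pi * Complex.I * m * (((k : ℝ) : ℂ) / (n : ℂ))) =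
    if (n : ℤ) ∣ m then 1 else 0 := by
  have hn0 : (n : ℂ) ≠ 0 := Nat.cast_ne_zero.mpr (by omega)
  have hz : ∀ k : ℕ, Complex.exp (2 * Real.pi * Complex.I * m * (((k : ℝ) : ℂ) / (n : ℂ)))
      = Complex.exp (2 * Real.pi * Complex.I * m / n) ^ k := by
    intro k
    rw [← Complex.exp_nat_mul]
    congr 1
    push_cast
    ring
  simp only [hz]
  set z := Complex.exp (2 * Real.pi * Complex.I * m / n) with hzdef
  by_cases hdvd : (n : ℤ) ∣ m
  · obtain ⟨j, rfl⟩ := hdvd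
    have hz1 : z = 1 := by
      rw [hzdef]
      have harg : (2 * (Real.pi:ℂ) * Complex.I * ((n:ℤ) * j : ℤ) / n) = (j : ℂ) * (2 * Real.pi * Complex.I) := by
        push_cast
        field_simp
      rw [harg, Complex.exp_int_mul_two_pi_mul_I]
    simp [hz1, Finset.sum_const, hn0]
  · rw [if_neg hdvd]
    have hzn : z ^ n = 1 := by
      rw [hzdef, ← Complex.exp_nat_mul]
      have : (n : ℂ) * (2 * Real.pi * Complex.I * m / n) = (m : ℂ) * (2 * Real.pi * Complex.I) := by
        field_simp
      rw [this, Complex.exp_int_mul_two_pi_mul_I]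
    have hz1 : z ≠ 1 := by
      intro h
      rw [hzdef, Complex.exp_eq_one_iff] at h
      obtain ⟨k, hk⟩ := h
      apply hdvd
      have h2 : (2 * (Real.pi:ℂ) * Complex.I) ≠ 0 := by
        simp [Real.pi_ne_zero, Complex.I_ne_zero]
      have hm : (m : ℂ) = (k : ℂ) * n := by
        field_simp at hk
        linear_combination hk
      have hmz : m = k * n := by exact_mod_cast hm
      exact ⟨k, by rw [hmz]; ring⟩
    rw [geom_sum_eq hz1, hzn]
    simp

/-- Exponential convergence of the trapezoidal rule for 1-periodic functions with
geometrically decaying Fourier coefficients. -/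
theorem trapezoidal_exponential_convergence (f : ℝ → ℂ) (c : ℤ → ℂ) (C ρ : ℝ)
    (hC : 0 < C) (hρ : 1 < ρ)
    (hper : Function.Periodic f 1)
    (hsum : ∀ x : ℝ, HasSum (fun m : ℤ => c m * Complex.exp (2 * Real.pi * Complex.I * m * x)) (f x))
    (habs : Summable fun m : ℤ => ‖c m‖)
    (hdecay : ∀ m : ℤ, ‖c m‖ ≤ C * ρ⁻¹ ^ m.natAbs)
    (n : ℕ) (hn : 1 ≤ n) :
    ‖(1 / (n : ℂ)) * (∑ k ∈ Finset.range n, f ((k : ℝ) / n)) - c 0‖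
      ≤ 2 * C * ρ⁻¹ ^ n / (1 - ρ⁻¹ ^ n) := by
  have hnz : (n : ℤ) ≠ 0 := by exact_mod_cast (by omega : n ≠ 0)
  set r : ℝ := ρ⁻¹ ^ n with hrdef
  have hρ0 : 0 < ρ⁻¹ := inv_pos.mpr (by linarith)
  have hρ1 : ρ⁻¹ < 1 := inv_lt_one_of_one_lt₀ hρ
  have hr0 : 0 ≤ r := le_of_lt (pow_pos hρ0 n)
  have hr1 : r < 1 := pow_lt_one₀ (le_of_lt hρ0) hρ1 (by omega)
  have hr1' : (1 : ℝ) - r ≠ 0 := by linarith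
  set g : ℤ → ℂ := fun m => c m * (if (n : ℤ) ∣ m then 1 else 0) with hgdef
  -- Step A: trapezoidal sum equals ∑' g
  have hT : (1 / (n : ℂ)) * (∑ k ∈ Finset.range n, f ((k : ℝ) / n)) = ∑' m : ℤ, g m := by
    have hswap : ∑ k ∈ Finset.range n, f ((k : ℝ) / n)
        = ∑' m : ℤ, ∑ k ∈ Finset.range n,
            c m * Complex.exp (2 * Real.pi * Complex.I * m * (((k : ℝ) / n : ℝ))) := by
      have h1 : ∑ k ∈ Finset.range n, f ((k : ℝ) / n)
          = ∑ k ∈ Finset.range n, ∑' m : ℤ,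
              c m * Complex.exp (2 * Real.pi * Complex.I * m * (((k : ℝ) / n : ℝ))) :=
        Finset.sum_congr rfl fun k _ => ((hsum ((k : ℝ) / n)).tsum_eq).symm
      rw [h1]
      exact (Summable.tsum_finsetSum (f := fun (k : ℕ) (m : ℤ) =>
        c m * Complex.exp (2 * Real.pi * Complex.I * m * (((k : ℝ) / n : ℝ))))
        (fun k _ => (hsum ((k : ℝ) / n)).summable)).symm
    rw [hswap, ← tsum_mul_left]
    congr 1
    funext m
    have : ∑ k ∈ Finset.range n,
        c m * Complex.exp (2 * Real.pi * Complex.I * m * (((k : ℝ) / n : ℝ)))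
        = c m * ∑ k ∈ Finset.range n,
            Complex.exp (2 * Real.pi * Complex.I * m * (((k : ℝ) : ℂ) / (n : ℂ))) := by
      rw [Finset.mul_sum]
      exact Finset.sum_congr rfl fun k _ => by push_cast; ring_nf
    rw [this, hgdef]
    have := aux_expsum n hn m
    calc (1 / (n:ℂ)) * (c m * ∑ k ∈ Finset.range n,
            Complex.exp (2 * Real.pi * Complex.I * m * (((k : ℝ) : ℂ) / (n : ℂ))))
        = c m * ((1 / (n:ℂ)) * ∑ k ∈ Finset.range n,
            Complex.exp (2 * Real.pi * Complex.I * m * (((k : ℝ) : ℂ) / (n : ℂ)))) := by ring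
      _ = c m * (if (n : ℤ) ∣ m then 1 else 0) := by rw [this]
  have hg_le : ∀ m : ℤ, ‖g m‖ ≤ ‖c m‖ := by
    intro m
    rw [hgdef]
    by_cases h : (n : ℤ) ∣ m <;> simp [h]
  have hgsum : Summable g := Summable.of_norm_bounded habs hg_le
  have hc0 : c 0 = g 0 := by simp [hgdef]
  have hsplit : (∑' m : ℤ, g m) - c 0 = ∑' m : ℤ, if m = 0 then 0 else g m := by
    rw [hc0, Summable.tsum_eq_add_tsum_ite hgsum 0]
    ring
  rw [hT, hsplit]
  -- Step C: the geometric bound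
  set F : ℤ → ℝ := fun j => if j = 0 then 0 else C * r ^ j.natAbs with hFdef
  have hgeo : HasSum (fun k : ℕ => r ^ k) (1 - r)⁻¹ := hasSum_geometric_of_lt_one hr0 hr1
  have hpos : HasSum (fun k : ℕ => if k = 0 then 0 else C * r ^ k) (C * (1 - r)⁻¹ - C) := by
    have h := (hgeo.mul_left C).sub (hasSum_ite_eq 0 C)
    have hfun : (fun k : ℕ => if k = 0 then (0:ℝ) else C * r ^ k) = (fun b => C * r ^ b - if b = 0 then C else 0) := by
      funext k
      by_cases hk : k = 0 <;> simp [hk]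
    rw [hfun]; exact h
  have hneg : HasSum (fun k : ℕ => C * r * r ^ k) (C * r * (1 - r)⁻¹) := hgeo.mul_left (C * r)
  have hF : HasSum F ((C * (1 - r)⁻¹ - C) + C * r * (1 - r)⁻¹) := by
    apply HasSum.of_nat_of_neg_add_one
    · convert hpos using 1
      funext k
      by_cases hk : k = 0 <;> simp [hFdef, hk]
    · convert hneg using 1
      funext k
      have e0 : (-((k:ℤ) + 1)) ≠ 0 := by omega
      have e1 : (-((k:ℤ) + 1)).natAbs = k + 1 := by omega
      simp only [hFdef]
      rw [if_neg e0, e1, pow_succ]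
      ring
  have hFval : ((C * (1 - r)⁻¹ - C) + C * r * (1 - r)⁻¹) = 2 * C * r / (1 - r) := by
    field_simp
    ring
  -- Step D: comparison
  have hGle : ∀ m : ℤ, ‖if m = 0 then (0:ℂ) else g m‖ ≤ ‖c m‖ := by
    intro m
    by_cases h : m = 0
    · simp [h]
    · rw [if_neg h]; exact hg_le m
  have hGsum : Summable (fun m : ℤ => ‖if m = 0 then (0:ℂ) else g m‖) :=
    Summable.of_nonneg_of_le (fun m => norm_nonneg _) hGle habs
  have hinj : Function.Injective (fun j : ℤ => (n : ℤ) * j) := fun a b h => by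
    simpa [hnz, show n ≠ 0 by omega] using h
  have hreindex : ∑' m : ℤ, ‖if m = 0 then (0:ℂ) else g m‖
      = ∑' j : ℤ, ‖if (n : ℤ) * j = 0 then (0:ℂ) else g ((n : ℤ) * j)‖ := by
    refine (hinj.tsum_eq ?_).symm
    intro m hm
    have hne : ‖if m = 0 then (0:ℂ) else g m‖ ≠ 0 := hm
    by_cases hm0 : m = 0
    · exact ⟨0, by simp [hm0]⟩
    · have hdvd : (n : ℤ) ∣ m := by
        by_contra hndvd
        apply hne
        simp [hm0, hgdef, hndvd]
      obtain ⟨j, hj⟩ := hdvd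
      exact ⟨j, hj.symm⟩
  have hterm : ∀ j : ℤ, ‖if (n : ℤ) * j = 0 then (0:ℂ) else g ((n : ℤ) * j)‖ ≤ F j := by
    intro j
    by_cases hj : j = 0
    · simp [hj, hFdef]
    · have hnj : (n : ℤ) * j ≠ 0 := mul_ne_zero hnz hj
      have hdvd : (n : ℤ) ∣ (n : ℤ) * j := ⟨j, rfl⟩
      rw [if_neg hnj, hgdef]
      simp only [if_pos hdvd, mul_one]
      have := hdecay ((n : ℤ) * j)
      have habs' : ((n : ℤ) * j).natAbs = n * j.natAbs := by
        rw [Int.natAbs_mul, Int.natAbs_natCast]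
      rw [habs', pow_mul] at this
      simpa [hFdef, hj, hrdef] using this
  have hsum2 : Summable (fun j : ℤ => ‖if (n : ℤ) * j = 0 then (0:ℂ) else g ((n : ℤ) * j)‖) := by
    exact (hGsum.comp_injective hinj)
  calc ‖∑' m : ℤ, if m = 0 then (0:ℂ) else g m‖
      ≤ ∑' m : ℤ, ‖if m = 0 then (0:ℂ) else g m‖ := norm_tsum_le_tsum_norm hGsum
    _ = ∑' j : ℤ, ‖if (n : ℤ) * j = 0 then (0:ℂ) else g ((n : ℤ) * j)‖ := hreindex
    _ ≤ ∑' j : ℤ, F j := Summable.tsum_le_tsum hterm hsum2 hF.summable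
    _ = 2 * C * r / (1 - r) := by rw [hF.tsum_eq, hFval]
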